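/- Let a be a rational number with a ≠ 0 and a ≠ −1, and set w = 3a³ + 4, x = a⁴ − a − 2/a², y = −a² + 1/a + 1/a⁴, z = a³ + 3. Then condition T(w,x,y,z) fails (i.e., zw + w² ≠ 0, xy + z² + zw + w² ≠ 0, 2xy + z² + w² ≠ 0, 3xy + z² − zw + w² ≠ 0, 4xy + z² − 2zw + w² ≠ 0, and xy ≠ wz) and condition S(w,x,y,z) fails (i.e., not (x² = wy and y² = xz), not (x = 0 and y = 0), not (w = y and x = 0 and z = 0), not (w + y = 0 and x = 0 and z = 0), not (w = x and w + y = 0 and w + z = 0), and not (w + x = 0 and w + y = 0 and w = z)). -/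

import Mathlib

lemma not_both (a : ℚ) (p : ℕ) (hp : 1 < p) (h1 : (p:ℤ) ∣ a.num) (h2 : (p:ℤ) ∣ (a.den:ℤ)) : False := by
  have h1' : p ∣ a.num.natAbs := by
    have := Int.natAbs_dvd_natAbs.mpr h1; simpa using this
  have h2' : p ∣ a.den := Int.ofNat_dvd.mp h2
  have hg := Nat.dvd_gcd h1' h2'
  rw [a.reduced] at hg
  exact absurd (Nat.le_of_dvd one_pos hg) (by omega)

lemma decA : ∀ x y : ZMod 8, 3*x^3 + 4*y^3 = 0 →
    ZMod.castHom (by norm_num : (2:ℕ) ∣ 8) (ZMod 2) x = 0 ∧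
    ZMod.castHom (by norm_num : (2:ℕ) ∣ 8) (ZMod 2) y = 0 := by decide

lemma nzA (a : ℚ) : 3*a^3 + 4 ≠ 0 := by
  intro h
  have hd : ((a.den:ℚ)) ≠ 0 := by exact_mod_cast a.den_ne_zero
  have hnum : (a.num:ℚ) = a * (a.den:ℚ) := by
    exact (Rat.mul_den_eq_num a).symm
  have hq : 3*(a.num:ℚ)^3 + 4*(a.den:ℚ)^3 = 0 := by
    rw [hnum]
    linear_combination ((a.den:ℚ))^3 * h
  have hZ : 3*a.num^3 + 4*(a.den:ℤ)^3 = 0 := by exact_mod_cast hq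
  have hm : 3*(a.num : ZMod 8)^3 + 4*((a.den:ℤ) : ZMod 8)^3 = 0 := by
    have := congrArg (fun n : ℤ => (n : ZMod 8)) hZ
    push_cast at this
    convert this <;> exact Int.cast_natCast _
  obtain ⟨hx, hy⟩ := decA _ _ hm
  rw [map_intCast] at hx hy
  exact not_both a 2 (by norm_num) ((ZMod.intCast_zmod_eq_zero_iff_dvd _ 2).mp hx)
    ((ZMod.intCast_zmod_eq_zero_iff_dvd _ 2).mp hy)

lemma decB : ∀ x y : ZMod 8, 4*x^3 + 7*y^3 = 0 →
    ZMod.castHom (by norm_num : (2:ℕ) ∣ 8) (ZMod 2) x = 0 ∧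
    ZMod.castHom (by norm_num : (2:ℕ) ∣ 8) (ZMod 2) y = 0 := by decide

lemma nzB (a : ℚ) : 4*a^3 + 7 ≠ 0 := by
  intro h
  have hd : ((a.den:ℚ)) ≠ 0 := by exact_mod_cast a.den_ne_zero
  have hnum : (a.num:ℚ) = a * (a.den:ℚ) := by
    exact (Rat.mul_den_eq_num a).symm
  have hq : 4*(a.num:ℚ)^3 + 7*(a.den:ℚ)^3 = 0 := by
    rw [hnum]
    linear_combination ((a.den:ℚ))^3 * h
  have hZ : 4*a.num^3 + 7*(a.den:ℤ)^3 = 0 := by exact_mod_cast hq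
  have hm : 4*(a.num : ZMod 8)^3 + 7*((a.den:ℤ) : ZMod 8)^3 = 0 := by
    have := congrArg (fun n : ℤ => (n : ZMod 8)) hZ
    push_cast at this
    convert this <;> exact Int.cast_natCast _
  obtain ⟨hx, hy⟩ := decB _ _ hm
  rw [map_intCast] at hx hy
  exact not_both a 2 (by norm_num) ((ZMod.intCast_zmod_eq_zero_iff_dvd _ 2).mp hx)
    ((ZMod.intCast_zmod_eq_zero_iff_dvd _ 2).mp hy)

lemma decC : ∀ x y : ZMod 8, 12*x^12 + 45*x^9*y^3 + 39*x^6*y^6 - 3*x^3*y^9 - 2*y^12 = 0 →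
    ZMod.castHom (by norm_num : (2:ℕ) ∣ 8) (ZMod 2) x = 0 ∧
    ZMod.castHom (by norm_num : (2:ℕ) ∣ 8) (ZMod 2) y = 0 := by decide

lemma nzC (a : ℚ) : 12*a^12 + 45*a^9 + 39*a^6 - 3*a^3 - 2 ≠ 0 := by
  intro h
  have hd : ((a.den:ℚ)) ≠ 0 := by exact_mod_cast a.den_ne_zero
  have hnum : (a.num:ℚ) = a * (a.den:ℚ) := by
    exact (Rat.mul_den_eq_num a).symm
  have hq : 12*(a.num:ℚ)^12 + 45*(a.num:ℚ)^9*(a.den:ℚ)^3 + 39*(a.num:ℚ)^6*(a.den:ℚ)^6 - 3*(a.num:ℚ)^3*(a.den:ℚ)^9 - 2*(a.den:ℚ)^12 = 0 := by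
    rw [hnum]
    linear_combination ((a.den:ℚ))^12 * h
  have hZ : 12*a.num^12 + 45*a.num^9*(a.den:ℤ)^3 + 39*a.num^6*(a.den:ℤ)^6 - 3*a.num^3*(a.den:ℤ)^9 - 2*(a.den:ℤ)^12 = 0 := by exact_mod_cast hq
  have hm : 12*(a.num : ZMod 8)^12 + 45*(a.num : ZMod 8)^9*((a.den:ℤ) : ZMod 8)^3 + 39*(a.num : ZMod 8)^6*((a.den:ℤ) : ZMod 8)^6 - 3*(a.num : ZMod 8)^3*((a.den:ℤ) : ZMod 8)^9 - 2*((a.den:ℤ) : ZMod 8)^12 = 0 := by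
    have := congrArg (fun n : ℤ => (n : ZMod 8)) hZ
    push_cast at this
    convert this <;> exact Int.cast_natCast _
  obtain ⟨hx, hy⟩ := decC _ _ hm
  rw [map_intCast] at hx hy
  exact not_both a 2 (by norm_num) ((ZMod.intCast_zmod_eq_zero_iff_dvd _ 2).mp hx)
    ((ZMod.intCast_zmod_eq_zero_iff_dvd _ 2).mp hy)

lemma decD : ∀ x y : ZMod 3, 8*x^12 + 34*x^9*y^3 + 29*x^6*y^6 - 6*x^3*y^9 - 4*y^12 = 0 →
    ZMod.castHom (by norm_num : (3:ℕ) ∣ 3) (ZMod 3) x = 0 ∧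
    ZMod.castHom (by norm_num : (3:ℕ) ∣ 3) (ZMod 3) y = 0 := by decide

lemma nzD (a : ℚ) : 8*a^12 + 34*a^9 + 29*a^6 - 6*a^3 - 4 ≠ 0 := by
  intro h
  have hd : ((a.den:ℚ)) ≠ 0 := by exact_mod_cast a.den_ne_zero
  have hnum : (a.num:ℚ) = a * (a.den:ℚ) := by
    exact (Rat.mul_den_eq_num a).symm
  have hq : 8*(a.num:ℚ)^12 + 34*(a.num:ℚ)^9*(a.den:ℚ)^3 + 29*(a.num:ℚ)^6*(a.den:ℚ)^6 - 6*(a.num:ℚ)^3*(a.den:ℚ)^9 - 4*(a.den:ℚ)^12 = 0 := by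
    rw [hnum]
    linear_combination ((a.den:ℚ))^12 * h
  have hZ : 8*a.num^12 + 34*a.num^9*(a.den:ℤ)^3 + 29*a.num^6*(a.den:ℤ)^6 - 6*a.num^3*(a.den:ℤ)^9 - 4*(a.den:ℤ)^12 = 0 := by exact_mod_cast hq
  have hm : 8*(a.num : ZMod 3)^12 + 34*(a.num : ZMod 3)^9*((a.den:ℤ) : ZMod 3)^3 + 29*(a.num : ZMod 3)^6*((a.den:ℤ) : ZMod 3)^6 - 6*(a.num : ZMod 3)^3*((a.den:ℤ) : ZMod 3)^9 - 4*((a.den:ℤ) : ZMod 3)^12 = 0 := by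
    have := congrArg (fun n : ℤ => (n : ZMod 3)) hZ
    push_cast at this
    convert this <;> exact Int.cast_natCast _
  obtain ⟨hx, hy⟩ := decD _ _ hm
  rw [map_intCast] at hx hy
  exact not_both a 3 (by norm_num) ((ZMod.intCast_zmod_eq_zero_iff_dvd _ 3).mp hx)
    ((ZMod.intCast_zmod_eq_zero_iff_dvd _ 3).mp hy)

lemma decE : ∀ x y : ZMod 8, 4*x^12 + 23*x^9*y^3 + 19*x^6*y^6 - 9*x^3*y^9 - 6*y^12 = 0 →
    ZMod.castHom (by norm_num : (2:ℕ) ∣ 8) (ZMod 2) x = 0 ∧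
    ZMod.castHom (by norm_num : (2:ℕ) ∣ 8) (ZMod 2) y = 0 := by decide

lemma nzE (a : ℚ) : 4*a^12 + 23*a^9 + 19*a^6 - 9*a^3 - 6 ≠ 0 := by
  intro h
  have hd : ((a.den:ℚ)) ≠ 0 := by exact_mod_cast a.den_ne_zero
  have hnum : (a.num:ℚ) = a * (a.den:ℚ) := by
    exact (Rat.mul_den_eq_num a).symm
  have hq : 4*(a.num:ℚ)^12 + 23*(a.num:ℚ)^9*(a.den:ℚ)^3 + 19*(a.num:ℚ)^6*(a.den:ℚ)^6 - 9*(a.num:ℚ)^3*(a.den:ℚ)^9 - 6*(a.den:ℚ)^12 = 0 := by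
    rw [hnum]
    linear_combination ((a.den:ℚ))^12 * h
  have hZ : 4*a.num^12 + 23*a.num^9*(a.den:ℤ)^3 + 19*a.num^6*(a.den:ℤ)^6 - 9*a.num^3*(a.den:ℤ)^9 - 6*(a.den:ℤ)^12 = 0 := by exact_mod_cast hq
  have hm : 4*(a.num : ZMod 8)^12 + 23*(a.num : ZMod 8)^9*((a.den:ℤ) : ZMod 8)^3 + 19*(a.num : ZMod 8)^6*((a.den:ℤ) : ZMod 8)^6 - 9*(a.num : ZMod 8)^3*((a.den:ℤ) : ZMod 8)^9 - 6*((a.den:ℤ) : ZMod 8)^12 = 0 := by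
    have := congrArg (fun n : ℤ => (n : ZMod 8)) hZ
    push_cast at this
    convert this <;> exact Int.cast_natCast _
  obtain ⟨hx, hy⟩ := decE _ _ hm
  rw [map_intCast] at hx hy
  exact not_both a 2 (by norm_num) ((ZMod.intCast_zmod_eq_zero_iff_dvd _ 2).mp hx)
    ((ZMod.intCast_zmod_eq_zero_iff_dvd _ 2).mp hy)

lemma decF : ∀ x y : ZMod 9, 12*x^9 + 9*x^6*y^3 - 12*x^3*y^6 - 8*y^9 = 0 →
    ZMod.castHom (by norm_num : (3:ℕ) ∣ 9) (ZMod 3) x = 0 ∧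
    ZMod.castHom (by norm_num : (3:ℕ) ∣ 9) (ZMod 3) y = 0 := by decide

lemma nzF (a : ℚ) : 12*a^9 + 9*a^6 - 12*a^3 - 8 ≠ 0 := by
  intro h
  have hd : ((a.den:ℚ)) ≠ 0 := by exact_mod_cast a.den_ne_zero
  have hnum : (a.num:ℚ) = a * (a.den:ℚ) := by
    exact (Rat.mul_den_eq_num a).symm
  have hq : 12*(a.num:ℚ)^9 + 9*(a.num:ℚ)^6*(a.den:ℚ)^3 - 12*(a.num:ℚ)^3*(a.den:ℚ)^6 - 8*(a.den:ℚ)^9 = 0 := by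
    rw [hnum]
    linear_combination ((a.den:ℚ))^9 * h
  have hZ : 12*a.num^9 + 9*a.num^6*(a.den:ℤ)^3 - 12*a.num^3*(a.den:ℤ)^6 - 8*(a.den:ℤ)^9 = 0 := by exact_mod_cast hq
  have hm : 12*(a.num : ZMod 9)^9 + 9*(a.num : ZMod 9)^6*((a.den:ℤ) : ZMod 9)^3 - 12*(a.num : ZMod 9)^3*((a.den:ℤ) : ZMod 9)^6 - 8*((a.den:ℤ) : ZMod 9)^9 = 0 := by
    have := congrArg (fun n : ℤ => (n : ZMod 9)) hZ
    push_cast at this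
    convert this <;> exact Int.cast_natCast _
  obtain ⟨hx, hy⟩ := decF _ _ hm
  rw [map_intCast] at hx hy
  exact not_both a 3 (by norm_num) ((ZMod.intCast_zmod_eq_zero_iff_dvd _ 3).mp hx)
    ((ZMod.intCast_zmod_eq_zero_iff_dvd _ 3).mp hy)

lemma decG : ∀ x y : ZMod 8, 4*x^12 + 11*x^9*y^3 + 10*x^6*y^6 + 3*x^3*y^9 + 2*y^12 = 0 →
    ZMod.castHom (by norm_num : (2:ℕ) ∣ 8) (ZMod 2) x = 0 ∧
    ZMod.castHom (by norm_num : (2:ℕ) ∣ 8) (ZMod 2) y = 0 := by decide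

lemma nzG (a : ℚ) : 4*a^12 + 11*a^9 + 10*a^6 + 3*a^3 + 2 ≠ 0 := by
  intro h
  have hd : ((a.den:ℚ)) ≠ 0 := by exact_mod_cast a.den_ne_zero
  have hnum : (a.num:ℚ) = a * (a.den:ℚ) := by
    exact (Rat.mul_den_eq_num a).symm
  have hq : 4*(a.num:ℚ)^12 + 11*(a.num:ℚ)^9*(a.den:ℚ)^3 + 10*(a.num:ℚ)^6*(a.den:ℚ)^6 + 3*(a.num:ℚ)^3*(a.den:ℚ)^9 + 2*(a.den:ℚ)^12 = 0 := by
    rw [hnum]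
    linear_combination ((a.den:ℚ))^12 * h
  have hZ : 4*a.num^12 + 11*a.num^9*(a.den:ℤ)^3 + 10*a.num^6*(a.den:ℤ)^6 + 3*a.num^3*(a.den:ℤ)^9 + 2*(a.den:ℤ)^12 = 0 := by exact_mod_cast hq
  have hm : 4*(a.num : ZMod 8)^12 + 11*(a.num : ZMod 8)^9*((a.den:ℤ) : ZMod 8)^3 + 10*(a.num : ZMod 8)^6*((a.den:ℤ) : ZMod 8)^6 + 3*(a.num : ZMod 8)^3*((a.den:ℤ) : ZMod 8)^9 + 2*((a.den:ℤ) : ZMod 8)^12 = 0 := by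
    have := congrArg (fun n : ℤ => (n : ZMod 8)) hZ
    push_cast at this
    convert this <;> exact Int.cast_natCast _
  obtain ⟨hx, hy⟩ := decG _ _ hm
  rw [map_intCast] at hx hy
  exact not_both a 2 (by norm_num) ((ZMod.intCast_zmod_eq_zero_iff_dvd _ 2).mp hx)
    ((ZMod.intCast_zmod_eq_zero_iff_dvd _ 2).mp hy)

lemma decH : ∀ x y : ZMod 2, 1*x^6 - 1*x^3*y^3 - 1*y^6 = 0 →
    ZMod.castHom (by norm_num : (2:ℕ) ∣ 2) (ZMod 2) x = 0 ∧
    ZMod.castHom (by norm_num : (2:ℕ) ∣ 2) (ZMod 2) y = 0 := by decide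

lemma nzH (a : ℚ) : 1*a^6 - 1*a^3 - 1 ≠ 0 := by
  intro h
  have hd : ((a.den:ℚ)) ≠ 0 := by exact_mod_cast a.den_ne_zero
  have hnum : (a.num:ℚ) = a * (a.den:ℚ) := by
    exact (Rat.mul_den_eq_num a).symm
  have hq : 1*(a.num:ℚ)^6 - 1*(a.num:ℚ)^3*(a.den:ℚ)^3 - 1*(a.den:ℚ)^6 = 0 := by
    rw [hnum]
    linear_combination ((a.den:ℚ))^6 * h
  have hZ : 1*a.num^6 - 1*a.num^3*(a.den:ℤ)^3 - 1*(a.den:ℤ)^6 = 0 := by exact_mod_cast hq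
  have hm : 1*(a.num : ZMod 2)^6 - 1*(a.num : ZMod 2)^3*((a.den:ℤ) : ZMod 2)^3 - 1*((a.den:ℤ) : ZMod 2)^6 = 0 := by
    have := congrArg (fun n : ℤ => (n : ZMod 2)) hZ
    push_cast at this
    convert this <;> exact Int.cast_natCast _
  obtain ⟨hx, hy⟩ := decH _ _ hm
  rw [map_intCast] at hx hy
  exact not_both a 2 (by norm_num) ((ZMod.intCast_zmod_eq_zero_iff_dvd _ 2).mp hx)
    ((ZMod.intCast_zmod_eq_zero_iff_dvd _ 2).mp hy)


/-- Condition S: the normalized signature `[w,x,y,z]` is degenerate,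
generalized equality, or affine. -/
def condS (w x y z : ℚ) : Prop :=
  (x ^ 2 = w * y ∧ y ^ 2 = x * z) ∨
  (x = 0 ∧ y = 0) ∨
  (w = y ∧ x = 0 ∧ z = 0) ∨
  (w + y = 0 ∧ x = 0 ∧ z = 0) ∨
  (w = x ∧ w + y = 0 ∧ w + z = 0) ∨
  (w + x = 0 ∧ w + y = 0 ∧ w = z)

/-- Condition T: the gadget `G₁` fails to work on the normalized signature `[w,x,y,z]`. -/
def condT (w x y z : ℚ) : Prop :=
  z * w + w ^ 2 = 0 ∨
  x * y + z ^ 2 + z * w + w ^ 2 = 0 ∨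
  2 * x * y + z ^ 2 + w ^ 2 = 0 ∨
  3 * x * y + z ^ 2 - z * w + w ^ 2 = 0 ∨
  4 * x * y + z ^ 2 - 2 * z * w + w ^ 2 = 0 ∨
  x * y = w * z

theorem stmt_11 (a : ℚ) (ha : a ≠ 0) (ha' : a ≠ -1) :
    ¬ condT (3 * a ^ 3 + 4) (a ^ 4 - a - 2 / a ^ 2) (-a ^ 2 + 1 / a + 1 / a ^ 4) (a ^ 3 + 3) ∧
    ¬ condS (3 * a ^ 3 + 4) (a ^ 4 - a - 2 / a ^ 2) (-a ^ 2 + 1 / a + 1 / a ^ 4) (a ^ 3 + 3) := by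
  have hcancel : ∀ p : ℚ, a * p = 0 → p = 0 := by
    intro p hp
    rcases mul_eq_zero.mp hp with h | h
    · exact absurd h ha
    · exact h
  have hGne : (a ^ 4 - a - 2 / a ^ 2) * (-a ^ 2 + 1 / a + 1 / a ^ 4) ≠ (3 * a ^ 3 + 4) * (a ^ 3 + 3) := by
    intro h
    apply nzG a
    apply hcancel
    field_simp at h
    linear_combination -a * h
  have hyne : (-a ^ 2 + 1 / a + 1 / a ^ 4) ≠ 0 := by
    intro h
    apply nzH a
    apply hcancel
    field_simp at h
    linear_combination -a * h
  constructor
  · rintro (h|h|h|h|h|h)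
    · rcases mul_eq_zero.mp (show (3*a^3+4)*(4*a^3+7) = 0 by linear_combination h) with h'|h'
      exacts [nzA a h', nzB a h']
    · apply nzC a; apply hcancel; field_simp at h; linear_combination a * h
    · apply nzD a; apply hcancel; field_simp at h; linear_combination a * h
    · apply nzE a; apply hcancel; field_simp at h; linear_combination a * h
    · apply nzF a; apply hcancel; field_simp at h; linear_combination a * h
    · exact hGne h
  · rintro (⟨hx2,hy2⟩|⟨hx,hy⟩|⟨h1,h2,h3⟩|⟨h1,h2,h3⟩|⟨h1,h2,h3⟩|⟨h1,h2,h3⟩)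
    · by_cases hx : (a ^ 4 - a - 2 / a ^ 2) = 0
      · rw [hx] at hx2
        rcases mul_eq_zero.mp
            (show (3 * a ^ 3 + 4) * (-a ^ 2 + 1 / a + 1 / a ^ 4) = 0 by linear_combination -hx2)
            with h'|h'
        · exact nzA a h'
        · exact hyne h'
      · have hkey : ((a ^ 4 - a - 2 / a ^ 2) * (-a ^ 2 + 1 / a + 1 / a ^ 4)) *
            ((a ^ 4 - a - 2 / a ^ 2) * (-a ^ 2 + 1 / a + 1 / a ^ 4) - (3 * a ^ 3 + 4) * (a ^ 3 + 3)) = 0 := by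
          linear_combination (-a ^ 2 + 1 / a + 1 / a ^ 4)^2 * hx2 + (3*a^3+4)*(-a ^ 2 + 1 / a + 1 / a ^ 4) * hy2
        rcases mul_eq_zero.mp hkey with h'|h'
        · rcases mul_eq_zero.mp h' with h''|h''
          exacts [hx h'', hyne h'']
        · exact hGne (sub_eq_zero.mp h')
    · exact hyne hy
    · have e1 : a^6 - a^3 - 2 = 0 := by
        field_simp at h2; linear_combination h2
      have h10 : (10:ℚ) = 0 := by linear_combination e1 - (a^3-4)*h3
      norm_num at h10
    · have e1 : a^6 - a^3 - 2 = 0 := by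
        field_simp at h2; linear_combination h2
      have h10 : (10:ℚ) = 0 := by linear_combination e1 - (a^3-4)*h3
      norm_num at h10
    · exact nzB a (by linear_combination h3)
    · have hm : a^3 + 1/2 = 0 := by linear_combination h3/2
      have e2 : (3*a^3+4)*a^4 - a^6 + a^3 + 1 = 0 := by
        apply hcancel; field_simp at h2; linear_combination a * h2
      have e3 : (5/2)*a^4 + 1/4 = 0 := by linear_combination e2 - (3*a^4 - a^3 + 3/2)*hm
      nlinarith [sq_nonneg (a^2), e3]
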